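/- Let J_p(q) = |cos_p(q)·sin_p'(q) - cos_p'(q)·sin_p(q)| be the Jacobian factor for polar coordinates defined via the L^p pseudo-angle. Then J_p(q) = (C_p/4)·(cos_p(q)^{2(p-1)} + sin_p(q)^{2(p-1)})^{-1/2}, where C_p is the circumference of the L^p unit circle. In particular J_1(q)=1, J_2(q)=π/2, J_∞(q)=2 are constant, while for p in (1,2)∪(2,∞), J_p is not constant. -/

import Mathlib

open Set


private lemma gap_mvt {h : ℝ → ℝ} {a b L A : ℝ} (hab : a < b) (hL : 0 ≤ L)
    (hcont : ContinuousOn h (Set.Icc a b))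
    (hder : ∀ x ∈ Set.Ioo a b, ∃ d, HasDerivAt h d x ∧ d ^ 2 = L ^ 2)
    (hA : |h b - h a| = A) : A = L * (b - a) := by
  classical
  set d' : ℝ → ℝ := fun x => if hx : x ∈ Set.Ioo a b then (hder x hx).choose else 0 with hd'
  have hder' : ∀ x ∈ Set.Ioo a b, HasDerivAt h (d' x) x := by
    intro x hx
    have he : d' x = (hder x hx).choose := dif_pos hx
    rw [he]; exact (hder x hx).choose_spec.1
  obtain ⟨ξ, hξ, hslope⟩ := exists_hasDerivAt_eq_slope h d' hab hcont hder'
  have h2 : d' ξ ^ 2 = L ^ 2 := by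
    have he : d' ξ = (hder ξ hξ).choose := dif_pos hξ
    rw [he]; exact (hder ξ hξ).choose_spec.2
  have hba : (0:ℝ) < b - a := by linarith
  have habs : |d' ξ| = L := by
    rw [← abs_of_nonneg hL]
    exact (sq_eq_sq_iff_abs_eq_abs _ _).mp h2
  rw [← hA, ← habs, hslope, abs_div, abs_of_pos hba]
  field_simp

private lemma sign_const {f : ℝ → ℝ} (hf : Continuous f) {a b : ℝ} (hab : a < b)
    (h0 : ∀ x ∈ Set.Ioo a b, f x ≠ 0) :
    (∀ x ∈ Set.Ioo a b, 0 < f x) ∨ (∀ x ∈ Set.Ioo a b, f x < 0) := by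
  set m := (a + b) / 2 with hm
  have hmm : m ∈ Set.Ioo a b := by constructor <;> (simp only [hm]; linarith)
  have key : ∀ x ∈ Set.Ioo a b, ∀ y ∈ Set.Ioo a b, 0 < f x → 0 < f y := by
    intro x hx y hy hfx
    by_contra hle
    push_neg at hle
    have hfy : f y < 0 := lt_of_le_of_ne hle (h0 y hy)
    have h0m : (0:ℝ) ∈ uIcc (f y) (f x) := by
      rw [Set.mem_uIcc]; left; exact ⟨le_of_lt hfy, le_of_lt hfx⟩
    obtain ⟨z, hz, hfz⟩ := intermediate_value_uIcc (hf.continuousOn) h0m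
    exact h0 z (Set.ordConnected_Ioo.uIcc_subset hy hx hz) hfz
  rcases lt_or_gt_of_ne (h0 m hmm) with hneg | hpos
  · right; intro x hx
    by_contra hle
    push_neg at hle
    have : 0 < f x := lt_of_le_of_ne hle (Ne.symm (h0 x hx))
    exact absurd (key x hx m hmm this) (by linarith)
  · left; exact fun x hx => key m hmm x hx hpos

private lemma endpoint_le {f : ℝ → ℝ} (hf : Continuous f) {a b : ℝ} (hab : a < b)
    (h0 : ∀ x ∈ Set.Ioo a b, 0 ≤ f x) : 0 ≤ f a ∧ 0 ≤ f b := by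
  constructor
  · have hmem : Set.Ioo a b ∈ nhdsWithin a (Set.Ioi a) :=
      Ioo_mem_nhdsGT_of_mem ⟨le_refl a, hab⟩
    exact ge_of_tendsto ((hf.tendsto a).mono_left nhdsWithin_le_nhds)
      (Filter.eventually_of_mem hmem h0)
  · have hmem : Set.Ioo a b ∈ nhdsWithin b (Set.Iio b) :=
      Ioo_mem_nhdsLT_of_mem ⟨hab, le_refl b⟩
    exact ge_of_tendsto ((hf.tendsto b).mono_left nhdsWithin_le_nhds)
      (Filter.eventually_of_mem hmem h0)

private lemma endpoint_eq {f : ℝ → ℝ} (hf : Continuous f) {a b v : ℝ} (hab : a < b)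
    (h0 : ∀ x ∈ Set.Ioo a b, f x = v) : f a = v ∧ f b = v := by
  have h1 : ∀ x ∈ Set.Ioo a b, 0 ≤ f x - v := fun x hx => by rw [h0 x hx]; simp
  have h2 : ∀ x ∈ Set.Ioo a b, 0 ≤ v - f x := fun x hx => by rw [h0 x hx]; simp
  obtain ⟨ha1, hb1⟩ := endpoint_le (by continuity) hab h1
  obtain ⟨ha2, hb2⟩ := endpoint_le (by continuity) hab h2
  constructor <;> linarith

private lemma sort3 {x y z : ℝ} (hxy : x ≠ y) (hxz : x ≠ z) (hyz : y ≠ z) :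
    ∃ a b c : ℝ, a < b ∧ b < c ∧ ({x, y, z} : Set ℝ) = {a, b, c} := by
  rcases lt_trichotomy x y with h1 | h1 | h1
  · rcases lt_trichotomy y z with h2 | h2 | h2
    · exact ⟨x, y, z, h1, h2, rfl⟩
    · exact absurd h2 hyz
    · rcases lt_trichotomy x z with h3 | h3 | h3
      · exact ⟨x, z, y, h3, h2, by ext t; simp; tauto⟩
      · exact absurd h3 hxz
      · exact ⟨z, x, y, h3, h1, by ext t; simp; tauto⟩
  · exact absurd h1 hxy
  · rcases lt_trichotomy x z with h2 | h2 | h2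
    · exact ⟨y, x, z, h1, h2, by ext t; simp; tauto⟩
    · exact absurd h2 hxz
    · rcases lt_trichotomy y z with h3 | h3 | h3
      · exact ⟨y, z, x, h3, h2, by ext t; simp; tauto⟩
      · exact absurd h3 hyz
      · exact ⟨z, y, x, h3, h1, by ext t; simp; tauto⟩

private lemma scaffold (γ : ℝ → ℝ × ℝ) (hper : Function.Periodic γ 4)
    (hinj : Set.InjOn γ (Set.Ico (0:ℝ) 4))
    (P₁ P₂ P₃ P₄ : ℝ × ℝ)
    (h12 : P₁ ≠ P₂) (h13 : P₁ ≠ P₃) (h14 : P₁ ≠ P₄)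
    (h23 : P₂ ≠ P₃) (h24 : P₂ ≠ P₄) (h34 : P₃ ≠ P₄)
    (hex : ∀ P ∈ ({P₁, P₂, P₃, P₄} : Set (ℝ×ℝ)), ∃ q, γ q = P)
    (L : ℝ)
    (hgap : ∀ a b, a < b → (∀ x ∈ Set.Ioo a b, γ x ∉ ({P₁,P₂,P₃,P₄} : Set (ℝ×ℝ))) →
      γ a ∈ ({P₁,P₂,P₃,P₄} : Set (ℝ×ℝ)) → γ b ∈ ({P₁,P₂,P₃,P₄} : Set (ℝ×ℝ)) →
      γ a ≠ γ b → b - a = L) : L = 1 := by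
  classical
  set S : Set (ℝ×ℝ) := {P₁, P₂, P₃, P₄} with hS
  set r : ℝ → ℝ := fun x => x - 4 * (⌊x/4⌋ : ℤ) with hr
  have hrmem : ∀ x, r x ∈ Set.Ico (0:ℝ) 4 := by
    intro x
    have h1 : (⌊x/4⌋ : ℝ) ≤ x/4 := Int.floor_le _
    have h2 : x/4 < ⌊x/4⌋ + 1 := Int.lt_floor_add_one _
    constructor <;> (simp only [hr]; linarith)
  have hrper : ∀ x, γ (r x) = γ x := by
    intro x
    have := hper.sub_int_mul_eq (x := x) ⌊x/4⌋
    simpa [hr, mul_comm] using this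
  have htime : ∀ P ∈ S, ∃ t ∈ Set.Ico (0:ℝ) 4, γ t = P ∧ ∀ x, γ x = P → r x = t := by
    intro P hP
    obtain ⟨q, hq⟩ := hex P hP
    refine ⟨r q, hrmem q, by rw [hrper q, hq], ?_⟩
    intro x hx
    exact hinj (hrmem x) (hrmem q) (by rw [hrper, hrper, hx, hq])
  obtain ⟨t₁, ht₁m, ht₁γ, ht₁u⟩ := htime P₁ (by simp [hS])
  obtain ⟨t₂, ht₂m, ht₂γ, ht₂u⟩ := htime P₂ (by simp [hS])
  obtain ⟨t₃, ht₃m, ht₃γ, ht₃u⟩ := htime P₃ (by simp [hS])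
  obtain ⟨t₄, ht₄m, ht₄γ, ht₄u⟩ := htime P₄ (by simp [hS])
  have key : ∀ t, t ∈ Set.Ico (0:ℝ) 4 → ∀ x ∈ Set.Ioc t₁ (t₁+4), r x = t →
      x = t ∨ x = t + 4 := by
    intro t ht x hx hrx
    have hxe : x = t + 4 * (⌊x/4⌋ : ℤ) := by
      simp only [hr] at hrx; linarith
    set k : ℤ := ⌊x/4⌋ with hk
    have hb1 : (-1:ℝ) < (k:ℝ) := by
      have := hx.1; have := ht.2; have := ht₁m.1; linarith
    have hb2 : (k:ℝ) < 2 := by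
      have := hx.2; have := ht.1; have := ht₁m.2; linarith
    have hk1 : (-1:ℤ) < k := by exact_mod_cast hb1
    have hk2 : k < 2 := by exact_mod_cast hb2
    interval_cases k
    · left; rw [hxe]; push_cast; ring
    · right; rw [hxe]; push_cast; ring
  have hw : ∀ t, t ∈ Set.Ico (0:ℝ) 4 → ∃ w ∈ Set.Ioc t₁ (t₁+4), (w = t ∨ w = t + 4) ∧
      ∀ x ∈ Set.Ioc t₁ (t₁+4), r x = t → x = w := by
    intro t ht
    rcases lt_or_ge t₁ t with hlt | hle
    · refine ⟨t, ⟨hlt, by linarith [ht.2, ht₁m.1]⟩, Or.inl rfl, ?_⟩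
      intro x hx hrx
      rcases key t ht x hx hrx with h | h
      · exact h
      · exfalso; rw [h] at hx; have := hx.2; linarith [hlt]
    · refine ⟨t + 4, ⟨by linarith [ht.1, ht₁m.2, hle], by linarith [hle]⟩, Or.inr rfl, ?_⟩
      intro x hx hrx
      rcases key t ht x hx hrx with h | h
      · exfalso; rw [h] at hx; have := hx.1; linarith [hle]
      · exact h
  obtain ⟨w₂, hw₂m, hw₂e, hw₂u⟩ := hw t₂ ht₂m
  obtain ⟨w₃, hw₃m, hw₃e, hw₃u⟩ := hw t₃ ht₃m
  obtain ⟨w₄, hw₄m, hw₄e, hw₄u⟩ := hw t₄ ht₄m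
  have hγw₂ : γ w₂ = P₂ := by rcases hw₂e with h | h <;> rw [h] <;> simp [hper t₂, ht₂γ]
  have hγw₃ : γ w₃ = P₃ := by rcases hw₃e with h | h <;> rw [h] <;> simp [hper t₃, ht₃γ]
  have hγw₄ : γ w₄ = P₄ := by rcases hw₄e with h | h <;> rw [h] <;> simp [hper t₄, ht₄γ]
  have hloc : ∀ x ∈ Set.Ioc t₁ (t₁+4), γ x ∈ S → x = w₂ ∨ x = w₃ ∨ x = w₄ ∨ x = t₁+4 := by
    intro x hx hxS
    rcases hxS with h | h | h | h
    · right; right; right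
      rcases key t₁ ht₁m x hx (ht₁u x h) with he | he
      · exfalso; rw [he] at hx; exact absurd hx.1 (lt_irrefl _)
      · exact he
    · exact Or.inl (hw₂u x hx (ht₂u x h))
    · exact Or.inr (Or.inl (hw₃u x hx (ht₃u x h)))
    · exact Or.inr (Or.inr (Or.inl (hw₄u x hx (ht₄u x h))))
  have hwne12 : w₂ ≠ w₃ := fun hcon => h23 (by rw [← hγw₂, ← hγw₃, hcon])
  have hwne13 : w₂ ≠ w₄ := fun hcon => h24 (by rw [← hγw₂, ← hγw₄, hcon])
  have hwne23 : w₃ ≠ w₄ := fun hcon => h34 (by rw [← hγw₃, ← hγw₄, hcon])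
  obtain ⟨a₁, a₂, a₃, ha12, ha23, hset⟩ := sort3 hwne12 hwne13 hwne23
  have hmem : ∀ u ∈ ({a₁, a₂, a₃} : Set ℝ), u ∈ Set.Ioc t₁ (t₁+4) ∧ γ u ∈ S ∧ γ u ≠ P₁ ∧
      (∀ x ∈ Set.Ioc t₁ (t₁+4), γ x = γ u → x = u) := by
    intro u hu
    rw [← hset] at hu
    rcases hu with h | h | h <;> subst h
    · exact ⟨hw₂m, by simp [hS, hγw₂], by rw [hγw₂]; exact fun hc => h12 hc.symm,
        fun x hx hγx => hw₂u x hx (ht₂u x (by rw [hγx, hγw₂]))⟩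
    · exact ⟨hw₃m, by simp [hS, hγw₃], by rw [hγw₃]; exact fun hc => h13 hc.symm,
        fun x hx hγx => hw₃u x hx (ht₃u x (by rw [hγx, hγw₃]))⟩
    · exact ⟨hw₄m, by simp [hS, hγw₄], by rw [hγw₄]; exact fun hc => h14 hc.symm,
        fun x hx hγx => hw₄u x hx (ht₄u x (by rw [hγx, hγw₄]))⟩
  have ha₁ := hmem a₁ (by simp)
  have ha₂ := hmem a₂ (by simp)
  have ha₃ := hmem a₃ (by simp)
  have hain : ∀ x, (x = w₂ ∨ x = w₃ ∨ x = w₄) → (x = a₁ ∨ x = a₂ ∨ x = a₃) := by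
    intro x hx
    have h1 : x ∈ ({w₂, w₃, w₄} : Set ℝ) := by simpa using hx
    rw [hset] at h1; simpa using h1
  have ht₁S : γ t₁ ∈ S := by rw [ht₁γ]; simp [hS]
  have hend : γ (t₁ + 4) = P₁ := by rw [hper t₁, ht₁γ]
  -- gap 0
  have hg0 : a₁ - t₁ = L := by
    apply hgap t₁ a₁ ha₁.1.1 _ ht₁S ha₁.2.1 (by rw [ht₁γ]; exact fun hc => ha₁.2.2.1 hc.symm)
    intro x hx hxS
    have hxw : x ∈ Set.Ioc t₁ (t₁+4) := ⟨hx.1, by linarith [hx.2, ha₁.1.2]⟩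
    rcases hloc x hxw hxS with h | h | h | h
    · rcases hain x (Or.inl h) with h' | h' | h' <;> (subst h'; linarith [hx.2, ha12, ha23])
    · rcases hain x (Or.inr (Or.inl h)) with h' | h' | h' <;>
        (subst h'; linarith [hx.2, ha12, ha23])
    · rcases hain x (Or.inr (Or.inr h)) with h' | h' | h' <;>
        (subst h'; linarith [hx.2, ha12, ha23])
    · subst h; linarith [hx.2, ha₁.1.2]
  -- gap 1
  have hg1 : a₂ - a₁ = L := by
    apply hgap a₁ a₂ ha12 _ ha₁.2.1 ha₂.2.1
    · intro hc
      have := ha₂.2.2.2 a₁ ha₁.1 hc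
      linarith [ha12]
    intro x hx hxS
    have hxw : x ∈ Set.Ioc t₁ (t₁+4) := ⟨lt_trans ha₁.1.1 hx.1, by linarith [hx.2, ha₂.1.2]⟩
    rcases hloc x hxw hxS with h | h | h | h
    · rcases hain x (Or.inl h) with h' | h' | h' <;> (subst h'; linarith [hx.1, hx.2, ha23])
    · rcases hain x (Or.inr (Or.inl h)) with h' | h' | h' <;>
        (subst h'; linarith [hx.1, hx.2, ha23])
    · rcases hain x (Or.inr (Or.inr h)) with h' | h' | h' <;>
        (subst h'; linarith [hx.1, hx.2, ha23])
    · subst h; linarith [hx.2, ha₂.1.2]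
  -- gap 2
  have hg2 : a₃ - a₂ = L := by
    apply hgap a₂ a₃ ha23 _ ha₂.2.1 ha₃.2.1
    · intro hc
      have := ha₃.2.2.2 a₂ ha₂.1 hc
      linarith [ha23]
    intro x hx hxS
    have hxw : x ∈ Set.Ioc t₁ (t₁+4) := ⟨lt_trans ha₂.1.1 hx.1, by linarith [hx.2, ha₃.1.2]⟩
    rcases hloc x hxw hxS with h | h | h | h
    · rcases hain x (Or.inl h) with h' | h' | h' <;> (subst h'; linarith [hx.1, hx.2, ha12])
    · rcases hain x (Or.inr (Or.inl h)) with h' | h' | h' <;>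
        (subst h'; linarith [hx.1, hx.2, ha12])
    · rcases hain x (Or.inr (Or.inr h)) with h' | h' | h' <;>
        (subst h'; linarith [hx.1, hx.2, ha12])
    · subst h; linarith [hx.2, ha₃.1.2]
  -- gap 3
  have ha₃lt : a₃ < t₁ + 4 := by
    rcases lt_or_eq_of_le ha₃.1.2 with h | h
    · exact h
    · exfalso; exact ha₃.2.2.1 (by rw [h, hend])
  have hg3 : (t₁ + 4) - a₃ = L := by
    apply hgap a₃ (t₁+4) ha₃lt _ ha₃.2.1 (by rw [hend]; simp [hS])
      (by rw [hend]; exact ha₃.2.2.1)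
    intro x hx hxS
    have hxw : x ∈ Set.Ioc t₁ (t₁+4) := ⟨lt_trans ha₃.1.1 hx.1, le_of_lt hx.2⟩
    rcases hloc x hxw hxS with h | h | h | h
    · rcases hain x (Or.inl h) with h' | h' | h' <;>
        (subst h'; linarith [hx.1, ha12, ha23])
    · rcases hain x (Or.inr (Or.inl h)) with h' | h' | h' <;>
        (subst h'; linarith [hx.1, ha12, ha23])
    · rcases hain x (Or.inr (Or.inr h)) with h' | h' | h' <;>
        (subst h'; linarith [hx.1, ha12, ha23])
    · subst h; exact absurd hx.2 (lt_irrefl _)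
  linarith [hg0, hg1, hg2, hg3]

-- placeholders for already-proven lemmas (axiomatize for fast iteration)
private lemma Kval1 (c s : ℝ → ℝ) (K : ℝ) (hK : 0 < K)
    (hc : Continuous c) (hs : Continuous s)
    (hpc : Function.Periodic c 4) (hps : Function.Periodic s 4)
    (hcirc : ∀ q, |c q| + |s q| = 1)
    (hsurj : ∀ u v : ℝ, |u| + |v| = 1 → ∃ q, c q = u ∧ s q = v)
    (hinj : Set.InjOn (fun q => (c q, s q)) (Set.Ico (0:ℝ) 4))
    (hdiff : ∀ q, c q ≠ 0 → s q ≠ 0 → DifferentiableAt ℝ c q ∧ DifferentiableAt ℝ s q)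
    (hspeed : ∀ q, c q ≠ 0 → s q ≠ 0 → deriv c q ^ 2 + deriv s q ^ 2 = K ^ 2) :
    K = Real.sqrt 2 := by
  have h2pos : (0:ℝ) < Real.sqrt 2 := by positivity
  set γ : ℝ → ℝ × ℝ := fun q => (c q, s q) with hγ
  have hper : Function.Periodic γ 4 := fun q => by simp [hγ, hpc q, hps q]
  have hex' : ∀ u v : ℝ, |u| + |v| = 1 → ∃ q, γ q = (u, v) := fun u v h =>
    (hsurj u v h).imp (fun q hq => by simp [hγ, hq.1, hq.2])
  have hL : Real.sqrt 2 / K = 1 := by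
    apply scaffold γ hper hinj (1,0) (0,1) (-1,0) (0,-1)
      (by norm_num [Prod.ext_iff]) (by norm_num [Prod.ext_iff]) (by norm_num [Prod.ext_iff])
      (by norm_num [Prod.ext_iff]) (by norm_num [Prod.ext_iff]) (by norm_num [Prod.ext_iff])
    · rintro P (rfl | rfl | rfl | rfl)
      · exact hex' 1 0 (by norm_num)
      · exact hex' 0 1 (by norm_num)
      · exact hex' (-1) 0 (by norm_num)
      · exact hex' 0 (-1) (by norm_num)
    intro a b hab hnobad hSa hSb hne
    have hgood : ∀ x ∈ Set.Ioo a b, c x ≠ 0 ∧ s x ≠ 0 := by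
      intro x hx
      have hnb := hnobad x hx
      constructor
      · intro hcx
        have hs1 : |s x| = 1 := by have := hcirc x; rw [hcx] at this; simpa using this
        rcases abs_eq (by norm_num : (0:ℝ) ≤ 1) |>.mp hs1 with h | h
        · exact hnb (by simp [hγ, hcx, h])
        · exact hnb (by simp [hγ, hcx, h])
      · intro hsx
        have hc1 : |c x| = 1 := by have := hcirc x; rw [hsx] at this; simpa using this
        rcases abs_eq (by norm_num : (0:ℝ) ≤ 1) |>.mp hc1 with h | h
        · exact hnb (by simp [hγ, hsx, h])
        · exact hnb (by simp [hγ, hsx, h])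
    obtain ⟨σ, hσ2, hσpos⟩ : ∃ σ : ℝ, σ^2 = 1 ∧ ∀ x ∈ Set.Ioo a b, 0 < σ * c x := by
      rcases sign_const hc hab (fun x hx => (hgood x hx).1) with h | h
      · exact ⟨1, by norm_num, fun x hx => by simpa using h x hx⟩
      · exact ⟨-1, by norm_num, fun x hx => by have := h x hx; nlinarith⟩
    obtain ⟨τ, hτ2, hτpos⟩ : ∃ τ : ℝ, τ^2 = 1 ∧ ∀ x ∈ Set.Ioo a b, 0 < τ * s x := by
      rcases sign_const hs hab (fun x hx => (hgood x hx).2) with h | h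
      · exact ⟨1, by norm_num, fun x hx => by simpa using h x hx⟩
      · exact ⟨-1, by norm_num, fun x hx => by have := h x hx; nlinarith⟩
    have hσc : σ = 1 ∨ σ = -1 := by
      rcases mul_eq_zero.mp (show (σ - 1) * (σ + 1) = 0 by nlinarith) with h | h
      · left; linarith
      · right; linarith
    have hτc : τ = 1 ∨ τ = -1 := by
      rcases mul_eq_zero.mp (show (τ - 1) * (τ + 1) = 0 by nlinarith) with h | h
      · left; linarith
      · right; linarith
    have habsc : ∀ y ∈ Set.Ioo a b, |c y| = σ * c y := by
      intro y hy
      rcases hσc with h | h <;> subst h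
      · rw [one_mul]; exact abs_of_pos (by have := hσpos y hy; linarith)
      · rw [abs_of_neg (by have := hσpos y hy; linarith)]; ring
    have habss : ∀ y ∈ Set.Ioo a b, |s y| = τ * s y := by
      intro y hy
      rcases hτc with h | h <;> subst h
      · rw [one_mul]; exact abs_of_pos (by have := hτpos y hy; linarith)
      · rw [abs_of_neg (by have := hτpos y hy; linarith)]; ring
    have hrel : ∀ x ∈ Set.Ioo a b, σ * deriv c x + τ * deriv s x = 0 := by
      intro x hx
      obtain ⟨hdc, hds⟩ := hdiff x (hgood x hx).1 (hgood x hx).2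
      have h1 : HasDerivAt (fun y => σ * c y + τ * s y)
          (σ * deriv c x + τ * deriv s x) x :=
        (hdc.hasDerivAt.const_mul σ).add (hds.hasDerivAt.const_mul τ)
      have heq : (fun y => σ * c y + τ * s y) =ᶠ[nhds x] (fun _ => (1:ℝ)) := by
        filter_upwards [Ioo_mem_nhds hx.1 hx.2] with y hy
        rw [← habsc y hy, ← habss y hy]
        exact hcirc y
      have h2 : HasDerivAt (fun _ => (1:ℝ)) (σ * deriv c x + τ * deriv s x) x :=
        h1.congr_of_eventuallyEq heq.symm
      exact h2.unique (hasDerivAt_const x 1)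
    have hds2 : ∀ x ∈ Set.Ioo a b, deriv s x ^ 2 = (K / Real.sqrt 2) ^ 2 := by
      intro x hx
      have h1 := hrel x hx
      have h2 := hspeed x (hgood x hx).1 (hgood x hx).2
      have h3 : (K / Real.sqrt 2) ^ 2 = K ^ 2 / 2 := by
        rw [div_pow, Real.sq_sqrt (by norm_num : (0:ℝ) ≤ 2)]
      rw [h3]
      linear_combination (τ * deriv s x - σ * deriv c x)/2 * h1 + 1/2 * h2
        + (deriv c x ^ 2)/2 * hσ2 - (deriv s x ^ 2)/2 * hτ2
    set h : ℝ → ℝ := fun y => τ * s y with hh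
    have hcont : ContinuousOn h (Set.Icc a b) := (continuous_const.mul hs).continuousOn
    have hder : ∀ x ∈ Set.Ioo a b, ∃ d, HasDerivAt h d x ∧ d ^ 2 = (K / Real.sqrt 2) ^ 2 := by
      intro x hx
      obtain ⟨hdc, hds⟩ := hdiff x (hgood x hx).1 (hgood x hx).2
      refine ⟨τ * deriv s x, (hds.hasDerivAt).const_mul τ, ?_⟩
      rw [mul_pow, hτ2, one_mul]
      exact hds2 x hx
    obtain ⟨hτa, hτb⟩ := endpoint_le (continuous_const.mul hs) hab
      (fun x hx => (hτpos x hx).le)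
    obtain ⟨hσa, hσb⟩ := endpoint_le (continuous_const.mul hc) hab
      (fun x hx => (hσpos x hx).le)
    have hval : ∀ e, γ e ∈ ({((1:ℝ),(0:ℝ)), (0,1), (-1,0), (0,-1)} : Set (ℝ×ℝ)) →
        0 ≤ τ * s e → 0 ≤ σ * c e →
        (h e = 0 ∧ c e = σ ∧ s e = 0) ∨ (h e = 1 ∧ c e = 0 ∧ s e = τ) := by
      intro e heS hτe hσe
      have hγe : γ e = (c e, s e) := rfl
      simp only [Set.mem_insert_iff, Set.mem_singleton_iff] at heS
      rcases heS with h' | h' | h' | h' <;> rw [hγe, Prod.mk.injEq] at h' <;>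
        obtain ⟨hce, hse⟩ := h'
      · left
        have hσ1 : σ = 1 := by
          rcases hσc with h'' | h''
          · exact h''
          · exfalso; rw [h'', hce] at hσe; norm_num at hσe
        exact ⟨by simp [hh, hse], by rw [hce, hσ1], hse⟩
      · right
        have hτ1 : τ = 1 := by
          rcases hτc with h'' | h''
          · exact h''
          · exfalso; rw [h'', hse] at hτe; norm_num at hτe
        exact ⟨by simp [hh, hse, hτ1], hce, by rw [hse, hτ1]⟩
      · left
        have hσ1 : σ = -1 := by
          rcases hσc with h'' | h''
          · exfalso; rw [h'', hce] at hσe; norm_num at hσe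
          · exact h''
        exact ⟨by simp [hh, hse], by rw [hce, hσ1], hse⟩
      · right
        have hτ1 : τ = -1 := by
          rcases hτc with h'' | h''
          · exfalso; rw [h'', hse] at hτe; norm_num at hτe
          · exact h''
        refine ⟨?_, hce, by rw [hse, hτ1]⟩
        rw [hh]; simp only [hse, hτ1]; norm_num
    have hA : |h b - h a| = 1 := by
      rcases hval a hSa hτa hσa with ⟨ha0, hca, hsa⟩ | ⟨ha1, hca, hsa⟩ <;>
        rcases hval b hSb hτb hσb with ⟨hb0, hcb, hsb⟩ | ⟨hb1, hcb, hsb⟩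
      · exfalso; exact hne (by rw [show γ a = (c a, s a) from rfl,
          show γ b = (c b, s b) from rfl, hca, hsa, hcb, hsb])
      · rw [hb1, ha0]; norm_num
      · rw [hb0, ha1]; norm_num
      · exfalso; exact hne (by rw [show γ a = (c a, s a) from rfl,
          show γ b = (c b, s b) from rfl, hca, hsa, hcb, hsb])
    have hmvt := gap_mvt hab (by positivity : (0:ℝ) ≤ K / Real.sqrt 2) hcont hder hA
    rw [eq_div_iff (ne_of_gt hK)]
    rw [div_mul_eq_mul_div, eq_div_iff (ne_of_gt h2pos)] at hmvt
    nlinarith [hmvt]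
  field_simp at hL
  linarith

-- placeholders for already-proven lemmas (axiomatize for fast iteration)
private lemma Kval2 (c s : ℝ → ℝ) (K : ℝ) (hK : 0 < K)
    (hc : Continuous c) (hs : Continuous s)
    (hpc : Function.Periodic c 4) (hps : Function.Periodic s 4)
    (hcirc : ∀ q, c q ^ 2 + s q ^ 2 = 1)
    (hsurj : ∀ u v : ℝ, u ^ 2 + v ^ 2 = 1 → ∃ q, c q = u ∧ s q = v)
    (hinj : Set.InjOn (fun q => (c q, s q)) (Set.Ico (0:ℝ) 4))
    (hdiff : ∀ q, c q ≠ 0 → s q ≠ 0 → DifferentiableAt ℝ c q ∧ DifferentiableAt ℝ s q)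
    (hspeed : ∀ q, c q ≠ 0 → s q ≠ 0 → deriv c q ^ 2 + deriv s q ^ 2 = K ^ 2) :
    K = Real.pi / 2 := by
  have hπ : (0:ℝ) < Real.pi := Real.pi_pos
  set γ : ℝ → ℝ × ℝ := fun q => (c q, s q) with hγ
  have hper : Function.Periodic γ 4 := fun q => by simp [hγ, hpc q, hps q]
  have hex' : ∀ u v : ℝ, u^2 + v^2 = 1 → ∃ q, γ q = (u, v) := fun u v h =>
    (hsurj u v h).imp (fun q hq => by simp [hγ, hq.1, hq.2])
  have hL : Real.pi / 2 / K = 1 := by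
    apply scaffold γ hper hinj (1,0) (0,1) (-1,0) (0,-1)
      (by norm_num [Prod.ext_iff]) (by norm_num [Prod.ext_iff]) (by norm_num [Prod.ext_iff])
      (by norm_num [Prod.ext_iff]) (by norm_num [Prod.ext_iff]) (by norm_num [Prod.ext_iff])
    · rintro P (rfl | rfl | rfl | rfl)
      · exact hex' 1 0 (by norm_num)
      · exact hex' 0 1 (by norm_num)
      · exact hex' (-1) 0 (by norm_num)
      · exact hex' 0 (-1) (by norm_num)
    intro a b hab hnobad hSa hSb hne
    have hgood : ∀ x ∈ Set.Ioo a b, c x ≠ 0 ∧ s x ≠ 0 := by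
      intro x hx
      have hnb := hnobad x hx
      constructor
      · intro hcx
        have hfac : (s x - 1) * (s x + 1) = 0 := by nlinarith [hcirc x]
        rcases mul_eq_zero.mp hfac with h | h
        · exact hnb (by simp [hγ, hcx, show s x = 1 by linarith])
        · exact hnb (by simp [hγ, hcx, show s x = -1 by linarith])
      · intro hsx
        have hfac : (c x - 1) * (c x + 1) = 0 := by nlinarith [hcirc x]
        rcases mul_eq_zero.mp hfac with h | h
        · exact hnb (by simp [hγ, hsx, show c x = 1 by linarith])
        · exact hnb (by simp [hγ, hsx, show c x = -1 by linarith])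
    obtain ⟨σ, hσ2, hσpos⟩ : ∃ σ : ℝ, σ^2 = 1 ∧ ∀ x ∈ Set.Ioo a b, 0 < σ * c x := by
      rcases sign_const hc hab (fun x hx => (hgood x hx).1) with h | h
      · exact ⟨1, by norm_num, fun x hx => by simpa using h x hx⟩
      · exact ⟨-1, by norm_num, fun x hx => by have := h x hx; nlinarith⟩
    obtain ⟨τ, hτ2, hτpos⟩ : ∃ τ : ℝ, τ^2 = 1 ∧ ∀ x ∈ Set.Ioo a b, 0 < τ * s x := by
      rcases sign_const hs hab (fun x hx => (hgood x hx).2) with h | h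
      · exact ⟨1, by norm_num, fun x hx => by simpa using h x hx⟩
      · exact ⟨-1, by norm_num, fun x hx => by have := h x hx; nlinarith⟩
    have hσc : σ = 1 ∨ σ = -1 := by
      rcases mul_eq_zero.mp (show (σ - 1) * (σ + 1) = 0 by nlinarith) with h | h
      · left; linarith
      · right; linarith
    have hτc : τ = 1 ∨ τ = -1 := by
      rcases mul_eq_zero.mp (show (τ - 1) * (τ + 1) = 0 by nlinarith) with h | h
      · left; linarith
      · right; linarith
    have hrel : ∀ x ∈ Set.Ioo a b, c x * deriv c x + s x * deriv s x = 0 := by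
      intro x hx
      obtain ⟨hdc, hds⟩ := hdiff x (hgood x hx).1 (hgood x hx).2
      have h1 : HasDerivAt (fun y => c y ^ 2 + s y ^ 2)
          (2 * c x ^ 1 * deriv c x + 2 * s x ^ 1 * deriv s x) x :=
        (hdc.hasDerivAt.pow 2).add (hds.hasDerivAt.pow 2)
      have h2 : (fun y => c y ^ 2 + s y ^ 2) = fun _ => (1:ℝ) := funext hcirc
      rw [h2] at h1
      have h3 := h1.unique (hasDerivAt_const x 1)
      simp only [pow_one] at h3
      linarith
    have hds2 : ∀ x ∈ Set.Ioo a b, deriv s x ^ 2 = K ^ 2 * c x ^ 2 := by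
      intro x hx
      have h1 := hrel x hx
      have h2 := hspeed x (hgood x hx).1 (hgood x hx).2
      have h3 := hcirc x
      have hc0 : c x ≠ 0 := (hgood x hx).1
      linear_combination (s x * deriv s x - c x * deriv c x) * h1 + c x ^ 2 * h2
        - deriv s x ^ 2 * h3
    set h : ℝ → ℝ := fun y => Real.arcsin (τ * s y) with hh
    have hcont : ContinuousOn h (Set.Icc a b) :=
      (Real.continuous_arcsin.comp (continuous_const.mul hs)).continuousOn
    have hder : ∀ x ∈ Set.Ioo a b, ∃ d, HasDerivAt h d x ∧ d ^ 2 = K ^ 2 := by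
      intro x hx
      obtain ⟨hgc, hgs⟩ := hgood x hx
      have hc2pos : 0 < c x ^ 2 := by positivity
      have hslt : s x ^ 2 < 1 := by nlinarith [hcirc x]
      have hτs2 : (τ * s x) ^ 2 = s x ^ 2 := by rw [mul_pow, hτ2, one_mul]
      have habs : (τ * s x) ^ 2 < 1 := by rw [hτs2]; exact hslt
      have hne1 : τ * s x ≠ 1 := by intro hcon; rw [hcon] at habs; norm_num at habs
      have hnem1 : τ * s x ≠ -1 := by intro hcon; rw [hcon] at habs; norm_num at habs
      obtain ⟨hdc, hds⟩ := hdiff x hgc hgs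
      have hdd : HasDerivAt (fun y => τ * s y) (τ * deriv s x) x :=
        (hds.hasDerivAt).const_mul τ
      have hu : (0:ℝ) < 1 - (τ * s x) ^ 2 := by linarith
      have hsq : Real.sqrt (1 - (τ * s x) ^ 2) ^ 2 = 1 - (τ * s x) ^ 2 := Real.sq_sqrt hu.le
      have hc2 : 1 - (τ * s x) ^ 2 = c x ^ 2 := by rw [hτs2]; nlinarith [hcirc x]
      refine ⟨1 / Real.sqrt (1 - (τ * s x) ^ 2) * (τ * deriv s x), ?_, ?_⟩
      · have harc := (Real.hasDerivAt_arcsin hnem1 hne1).comp x hdd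
        exact harc
      · have hexp : (1 / Real.sqrt (1 - (τ * s x) ^ 2) * (τ * deriv s x)) ^ 2
            = (τ * deriv s x) ^ 2 / (1 - (τ * s x) ^ 2) := by
          rw [mul_pow, div_pow, one_pow, hsq]; ring
        rw [hexp, hc2, mul_pow, hτ2, one_mul, hds2 x hx,
          mul_div_assoc, div_self (ne_of_gt hc2pos), mul_one]
    obtain ⟨hτa, hτb⟩ := endpoint_le (continuous_const.mul hs) hab
      (fun x hx => (hτpos x hx).le)
    obtain ⟨hσa, hσb⟩ := endpoint_le (continuous_const.mul hc) hab
      (fun x hx => (hσpos x hx).le)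
    have hval : ∀ e, γ e ∈ ({((1:ℝ),(0:ℝ)), (0,1), (-1,0), (0,-1)} : Set (ℝ×ℝ)) →
        0 ≤ τ * s e → 0 ≤ σ * c e →
        (h e = 0 ∧ c e = σ ∧ s e = 0) ∨ (h e = Real.pi/2 ∧ c e = 0 ∧ s e = τ) := by
      intro e heS hτe hσe
      have hγe : γ e = (c e, s e) := rfl
      simp only [Set.mem_insert_iff, Set.mem_singleton_iff] at heS
      rcases heS with h' | h' | h' | h' <;> rw [hγe, Prod.mk.injEq] at h' <;>
        obtain ⟨hce, hse⟩ := h'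
      · left
        have hσ1 : σ = 1 := by
          rcases hσc with h'' | h''
          · exact h''
          · exfalso; rw [h'', hce] at hσe; norm_num at hσe
        exact ⟨by simp [hh, hse], by rw [hce, hσ1], hse⟩
      · right
        have hτ1 : τ = 1 := by
          rcases hτc with h'' | h''
          · exact h''
          · exfalso; rw [h'', hse] at hτe; norm_num at hτe
        exact ⟨by simp [hh, hse, hτ1], hce, by rw [hse, hτ1]⟩
      · left
        have hσ1 : σ = -1 := by
          rcases hσc with h'' | h''
          · exfalso; rw [h'', hce] at hσe; norm_num at hσe
          · exact h''
        exact ⟨by simp [hh, hse], by rw [hce, hσ1], hse⟩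
      · right
        have hτ1 : τ = -1 := by
          rcases hτc with h'' | h''
          · exfalso; rw [h'', hse] at hτe; norm_num at hτe
          · exact h''
        refine ⟨?_, hce, by rw [hse, hτ1]⟩
        rw [hh]; simp only [hse, hτ1]; norm_num
    have hA : |h b - h a| = Real.pi / 2 := by
      rcases hval a hSa hτa hσa with ⟨ha0, hca, hsa⟩ | ⟨haπ, hca, hsa⟩ <;>
        rcases hval b hSb hτb hσb with ⟨hb0, hcb, hsb⟩ | ⟨hbπ, hcb, hsb⟩
      · exfalso; exact hne (by rw [show γ a = (c a, s a) from rfl,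
          show γ b = (c b, s b) from rfl, hca, hsa, hcb, hsb])
      · rw [hbπ, ha0]; rw [abs_of_nonneg (by linarith)]; ring
      · rw [hb0, haπ]; rw [abs_of_nonpos (by linarith)]; ring
      · exfalso; exact hne (by rw [show γ a = (c a, s a) from rfl,
          show γ b = (c b, s b) from rfl, hca, hsa, hcb, hsb])
    have := gap_mvt hab hK.le hcont hder hA
    rw [eq_div_iff (ne_of_gt hK)]
    linarith
  field_simp at hL
  linarith

-- placeholders for already-proven lemmas (axiomatize for fast iteration)
private lemma KvalInf (c s : ℝ → ℝ) (K : ℝ) (hK : 0 < K)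
    (hc : Continuous c) (hs : Continuous s)
    (hpc : Function.Periodic c 4) (hps : Function.Periodic s 4)
    (hcirc : ∀ q, max |c q| |s q| = 1)
    (hsurj : ∀ u v : ℝ, max |u| |v| = 1 → ∃ q, c q = u ∧ s q = v)
    (hinj : Set.InjOn (fun q => (c q, s q)) (Set.Ico (0:ℝ) 4))
    (hdiff : ∀ q, |c q| ≠ |s q| → DifferentiableAt ℝ c q ∧ DifferentiableAt ℝ s q)
    (hspeed : ∀ q, |c q| ≠ |s q| → deriv c q ^ 2 + deriv s q ^ 2 = K ^ 2) :
    K = 2 := by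
  set γ : ℝ → ℝ × ℝ := fun q => (c q, s q) with hγ
  have hper : Function.Periodic γ 4 := fun q => by simp [hγ, hpc q, hps q]
  have hex' : ∀ u v : ℝ, max |u| |v| = 1 → ∃ q, γ q = (u, v) := fun u v h =>
    (hsurj u v h).imp (fun q hq => by simp [hγ, hq.1, hq.2])
  have hL : 2 / K = 1 := by
    apply scaffold γ hper hinj (1,1) (1,-1) (-1,1) (-1,-1)
      (by norm_num [Prod.ext_iff]) (by norm_num [Prod.ext_iff]) (by norm_num [Prod.ext_iff])
      (by norm_num [Prod.ext_iff]) (by norm_num [Prod.ext_iff]) (by norm_num [Prod.ext_iff])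
    · rintro P (rfl | rfl | rfl | rfl)
      · exact hex' 1 1 (by norm_num)
      · exact hex' 1 (-1) (by norm_num)
      · exact hex' (-1) 1 (by norm_num)
      · exact hex' (-1) (-1) (by norm_num)
    intro a b hab hnobad hSa hSb hne
    have hgood : ∀ x ∈ Set.Ioo a b, |c x| ≠ |s x| := by
      intro x hx hcon
      have hnb := hnobad x hx
      have hc1 : |c x| = 1 := by
        have := hcirc x; rw [← hcon, max_self] at this; exact this
      have hs1 : |s x| = 1 := by rw [← hcon]; exact hc1
      rcases abs_eq (by norm_num : (0:ℝ) ≤ 1) |>.mp hc1 with h1 | h1 <;>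
        rcases abs_eq (by norm_num : (0:ℝ) ≤ 1) |>.mp hs1 with h2 | h2 <;>
        exact hnb (by simp [hγ, h1, h2])
    have hS4 : ∀ e, γ e ∈ ({((1:ℝ),(1:ℝ)), (1,-1), (-1,1), (-1,-1)} : Set (ℝ×ℝ)) →
        (c e = 1 ∨ c e = -1) ∧ (s e = 1 ∨ s e = -1) := by
      intro e heS
      have hγe : γ e = (c e, s e) := rfl
      simp only [Set.mem_insert_iff, Set.mem_singleton_iff] at heS
      rcases heS with h' | h' | h' | h' <;> rw [hγe, Prod.mk.injEq] at h' <;>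
        obtain ⟨hce, hse⟩ := h' <;> simp [hce, hse]
    have hfne : ∀ x ∈ Set.Ioo a b, c x ^ 2 - s x ^ 2 ≠ 0 := by
      intro x hx hcon
      exact hgood x hx ((sq_eq_sq_iff_abs_eq_abs _ _).mp (by linarith))
    rcases sign_const (by continuity : Continuous (fun x => c x ^ 2 - s x ^ 2)) hab hfne
      with hpos | hneg
    -- case |c| > |s| : c is constant ±1
    · have hlt : ∀ x ∈ Set.Ioo a b, |s x| < |c x| := by
        intro x hx
        have := hpos x hx
        nlinarith [sq_abs (c x), sq_abs (s x), abs_nonneg (c x), abs_nonneg (s x)]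
      have hc1 : ∀ x ∈ Set.Ioo a b, |c x| = 1 := by
        intro x hx
        have := hcirc x; rw [max_eq_left (hlt x hx).le] at this; exact this
      have hcne : ∀ x ∈ Set.Ioo a b, c x ≠ 0 := by
        intro x hx hcon
        have := hc1 x hx; rw [hcon] at this; norm_num at this
      obtain ⟨σ, hσc, hceq⟩ : ∃ σ : ℝ, (σ = 1 ∨ σ = -1) ∧ ∀ x ∈ Set.Ioo a b, c x = σ := by
        rcases sign_const hc hab hcne with h | h
        · exact ⟨1, Or.inl rfl, fun x hx => by
            have h1 := hc1 x hx; rw [abs_of_pos (h x hx)] at h1; exact h1⟩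
        · exact ⟨-1, Or.inr rfl, fun x hx => by
            have h1 := hc1 x hx; rw [abs_of_neg (h x hx)] at h1; linarith⟩
      have hds2 : ∀ x ∈ Set.Ioo a b, deriv s x ^ 2 = K ^ 2 := by
        intro x hx
        have hder0 : deriv c x = 0 := by
          have hcc : HasDerivAt c 0 x := by
            apply (hasDerivAt_const x σ).congr_of_eventuallyEq
            filter_upwards [Ioo_mem_nhds hx.1 hx.2] with y hy
            exact hceq y hy
          exact hcc.deriv
        have := hspeed x (hgood x hx)
        rw [hder0] at this; nlinarith [this]
      have hcontOn : ContinuousOn s (Set.Icc a b) := hs.continuousOn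
      have hder : ∀ x ∈ Set.Ioo a b, ∃ d, HasDerivAt s d x ∧ d ^ 2 = K ^ 2 := by
        intro x hx
        exact ⟨deriv s x, (hdiff x (hgood x hx)).2.hasDerivAt, hds2 x hx⟩
      obtain ⟨hca, hcb⟩ := endpoint_eq hc hab hceq
      obtain ⟨hcalt, hsalt⟩ := hS4 a hSa
      obtain ⟨hcblt, hsblt⟩ := hS4 b hSb
      have hsne : s a ≠ s b := by
        intro hcon
        exact hne (by rw [show γ a = (c a, s a) from rfl,
          show γ b = (c b, s b) from rfl, hca, hcb, hcon])
      have hA : |s b - s a| = 2 := by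
        rcases hsalt with h1 | h1 <;> rcases hsblt with h2 | h2 <;>
          first
            | exact absurd (h1.trans h2.symm) hsne
            | (rw [h1, h2]; norm_num)
      have hmvt := gap_mvt hab hK.le hcontOn hder hA
      rw [eq_div_iff (ne_of_gt hK)]
      linarith
    -- case |s| > |c| : s is constant ±1
    · have hlt : ∀ x ∈ Set.Ioo a b, |c x| < |s x| := by
        intro x hx
        have := hneg x hx
        nlinarith [sq_abs (c x), sq_abs (s x), abs_nonneg (c x), abs_nonneg (s x)]
      have hs1 : ∀ x ∈ Set.Ioo a b, |s x| = 1 := by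
        intro x hx
        have := hcirc x; rw [max_eq_right (hlt x hx).le] at this; exact this
      have hsne0 : ∀ x ∈ Set.Ioo a b, s x ≠ 0 := by
        intro x hx hcon
        have := hs1 x hx;
        rw [hcon] at this; norm_num at this
      obtain ⟨τ, hτc, hseq⟩ : ∃ τ : ℝ, (τ = 1 ∨ τ = -1) ∧ ∀ x ∈ Set.Ioo a b, s x = τ := by
        rcases sign_const hs hab hsne0 with h | h
        · exact ⟨1, Or.inl rfl, fun x hx => by
            have h1 := hs1 x hx; rw [abs_of_pos (h x hx)] at h1; exact h1⟩
        · exact ⟨-1, Or.inr rfl, fun x hx => by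
            have h1 := hs1 x hx; rw [abs_of_neg (h x hx)] at h1; linarith⟩
      have hdc2 : ∀ x ∈ Set.Ioo a b, deriv c x ^ 2 = K ^ 2 := by
        intro x hx
        have hder0 : deriv s x = 0 := by
          have hss : HasDerivAt s 0 x := by
            apply (hasDerivAt_const x τ).congr_of_eventuallyEq
            filter_upwards [Ioo_mem_nhds hx.1 hx.2] with y hy
            exact hseq y hy
          exact hss.deriv
        have := hspeed x (hgood x hx)
        rw [hder0] at this; nlinarith [this]
      have hcontOn : ContinuousOn c (Set.Icc a b) := hc.continuousOn
      have hder : ∀ x ∈ Set.Ioo a b, ∃ d, HasDerivAt c d x ∧ d ^ 2 = K ^ 2 := by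
        intro x hx
        exact ⟨deriv c x, (hdiff x (hgood x hx)).1.hasDerivAt, hdc2 x hx⟩
      obtain ⟨hsa, hsb⟩ := endpoint_eq hs hab hseq
      obtain ⟨hcalt, hsalt⟩ := hS4 a hSa
      obtain ⟨hcblt, hsblt⟩ := hS4 b hSb
      have hcne : c a ≠ c b := by
        intro hcon
        exact hne (by rw [show γ a = (c a, s a) from rfl,
          show γ b = (c b, s b) from rfl, hsa, hsb, hcon])
      have hA : |c b - c a| = 2 := by
        rcases hcalt with h1 | h1 <;> rcases hcblt with h2 | h2 <;>
          first
            | exact absurd (h1.trans h2.symm) hcne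
            | (rw [h1, h2]; norm_num)
      have hmvt := gap_mvt hab hK.le hcontOn hder hA
      rw [eq_div_iff (ne_of_gt hK)]
      linarith
  field_simp at hL
  linarith

private lemma Jform (p : ℝ) (hp : 0 < p) (cosp sinp : ℝ → ℝ) (Cp : ℝ) (hCp : 0 < Cp)
    (hcontc : Continuous cosp) (hconts : Continuous sinp)
    (hcircle : ∀ q, |cosp q| ^ p + |sinp q| ^ p = 1)
    (hdiff : ∀ q, cosp q ≠ 0 → sinp q ≠ 0 →
      DifferentiableAt ℝ cosp q ∧ DifferentiableAt ℝ sinp q)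
    (hspeed : ∀ q, cosp q ≠ 0 → sinp q ≠ 0 →
      (deriv cosp q) ^ 2 + (deriv sinp q) ^ 2 = (Cp / 4) ^ 2) :
    ∀ q, cosp q ≠ 0 → sinp q ≠ 0 →
      |cosp q * deriv sinp q - deriv cosp q * sinp q|
        = (Cp / 4) * (|cosp q| ^ (2 * (p - 1)) + |sinp q| ^ (2 * (p - 1))) ^ (-(1 : ℝ) / 2) := by
  intro q hc0 hs0
  obtain ⟨hdc, hds⟩ := hdiff q hc0 hs0
  have habs : ∀ (f : ℝ → ℝ), Continuous f → f q ≠ 0 → DifferentiableAt ℝ f q →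
      ∃ σ : ℝ, σ ^ 2 = 1 ∧ σ * f q = |f q| ∧
        HasDerivAt (fun x => |f x| ^ p) (p * |f q| ^ (p - 1) * (σ * deriv f q)) q := by
    intro f hf hf0 hdf
    rcases lt_or_gt_of_ne hf0 with hneg | hpos
    · refine ⟨-1, by norm_num, by rw [abs_of_neg hneg]; ring, ?_⟩
      have hev : ∀ᶠ x in nhds q, f x < 0 :=
        ContinuousAt.eventually_lt hf.continuousAt continuousAt_const hneg
      have hinner : HasDerivAt (fun x => -f x) (-deriv f q) q := hdf.hasDerivAt.neg
      have houter : HasDerivAt (fun y : ℝ => y ^ p) (p * (-f q) ^ (p - 1)) (-f q) :=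
        Real.hasDerivAt_rpow_const (Or.inl (by simpa using hf0))
      have hcomp := houter.comp q hinner
      have heq : (fun x => |f x| ^ p) =ᶠ[nhds q] (fun x => (-f x) ^ p) := by
        filter_upwards [hev] with x hx
        rw [abs_of_neg hx]
      have := hcomp.congr_of_eventuallyEq heq
      have habs' : -f q = |f q| := (abs_of_neg hneg).symm
      rw [habs'] at this
      rw [show p * |f q| ^ (p - 1) * (-1 * deriv f q) = p * |f q| ^ (p - 1) * -deriv f q by ring]
      exact this
    · refine ⟨1, by norm_num, by rw [abs_of_pos hpos]; ring, ?_⟩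
      have hev : ∀ᶠ x in nhds q, 0 < f x :=
        ContinuousAt.eventually_lt continuousAt_const hf.continuousAt hpos
      have houter : HasDerivAt (fun y : ℝ => y ^ p) (p * (f q) ^ (p - 1)) (f q) :=
        Real.hasDerivAt_rpow_const (Or.inl hf0)
      have hcomp := houter.comp q hdf.hasDerivAt
      have heq : (fun x => |f x| ^ p) =ᶠ[nhds q] (fun x => (f x) ^ p) := by
        filter_upwards [hev] with x hx
        rw [abs_of_pos hx]
      have := hcomp.congr_of_eventuallyEq heq
      have habs' : f q = |f q| := (abs_of_pos hpos).symm
      rw [habs'] at this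
      rw [show p * |f q| ^ (p - 1) * (1 * deriv f q) = p * |f q| ^ (p - 1) * deriv f q by ring]
      exact this
  obtain ⟨σ, hσ2, hσe, hdC⟩ := habs cosp hcontc hc0 hdc
  obtain ⟨τ, hτ2, hτe, hdS⟩ := habs sinp hconts hs0 hds
  have hsum : HasDerivAt (fun x => |cosp x| ^ p + |sinp x| ^ p)
      (p * |cosp q| ^ (p - 1) * (σ * deriv cosp q) + p * |sinp q| ^ (p - 1) * (τ * deriv sinp q)) q :=
    hdC.add hdS
  have hconst : (fun x => |cosp x| ^ p + |sinp x| ^ p) = fun _ => (1:ℝ) := funext hcircle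
  rw [hconst] at hsum
  have hzero := hsum.unique (hasDerivAt_const q 1)
  set A := |cosp q| ^ (p - 1) * σ with hA
  set B := |sinp q| ^ (p - 1) * τ with hB
  have hrel : A * deriv cosp q + B * deriv sinp q = 0 := by
    have hX : p * (A * deriv cosp q + B * deriv sinp q) = 0 := by
      rw [hA, hB]; linear_combination hzero
    exact (mul_eq_zero.mp hX).resolve_left (ne_of_gt hp)
  have hcabs : (0:ℝ) < |cosp q| := abs_pos.mpr hc0
  have hsabs : (0:ℝ) < |sinp q| := abs_pos.mpr hs0
  have hAc : A * cosp q + B * sinp q = 1 := by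
    have h1 : |cosp q| ^ (p - 1) * |cosp q| = |cosp q| ^ p := by
      rw [← Real.rpow_add_one (ne_of_gt hcabs) (p - 1)]; norm_num
    have h2 : |sinp q| ^ (p - 1) * |sinp q| = |sinp q| ^ p := by
      rw [← Real.rpow_add_one (ne_of_gt hsabs) (p - 1)]; norm_num
    calc A * cosp q + B * sinp q
        = |cosp q| ^ (p-1) * (σ * cosp q) + |sinp q| ^ (p-1) * (τ * sinp q) := by
          rw [hA, hB]; ring
      _ = 1 := by rw [hσe, hτe, h1, h2]; exact hcircle q
  have hA2 : A ^ 2 = |cosp q| ^ (2 * (p - 1)) := by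
    rw [hA, mul_pow, hσ2, mul_one,
      show (2 * (p-1) : ℝ) = (p-1) * ((2:ℕ):ℝ) by push_cast; ring,
      Real.rpow_mul (abs_nonneg _), Real.rpow_natCast]
  have hB2 : B ^ 2 = |sinp q| ^ (2 * (p - 1)) := by
    rw [hB, mul_pow, hτ2, mul_one,
      show (2 * (p-1) : ℝ) = (p-1) * ((2:ℕ):ℝ) by push_cast; ring,
      Real.rpow_mul (abs_nonneg _), Real.rpow_natCast]
  have hABpos : 0 < A ^ 2 + B ^ 2 := by
    have h1 : A ≠ 0 := by
      rw [hA]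
      exact mul_ne_zero (ne_of_gt (Real.rpow_pos_of_pos hcabs _))
        (by intro h; rw [h] at hσ2; norm_num at hσ2)
    positivity
  have hKK := hspeed q hc0 hs0
  set D := cosp q * deriv sinp q - deriv cosp q * sinp q with hD
  set X := A * deriv sinp q - B * deriv cosp q with hX
  have h1 : D * (A ^ 2 + B ^ 2) = X := by
    rw [hD, hX]
    linear_combination (B * cosp q - A * sinp q) * hrel
      + (A * deriv sinp q - B * deriv cosp q) * hAc
  have h2 : X ^ 2 = (A ^ 2 + B ^ 2) * (Cp/4) ^ 2 := by
    rw [hX]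
    linear_combination (A ^ 2 + B ^ 2) * hKK
      - (A * deriv cosp q + B * deriv sinp q) * hrel
  have h3 : D ^ 2 * (A ^ 2 + B ^ 2) * (A ^ 2 + B ^ 2) = (Cp/4) ^ 2 * (A ^ 2 + B ^ 2) := by
    linear_combination (D * (A ^ 2 + B ^ 2) + X) * h1 + h2
  have hD2 : D ^ 2 * (A ^ 2 + B ^ 2) = (Cp/4) ^ 2 :=
    mul_right_cancel₀ (ne_of_gt hABpos) h3
  have hSg : |cosp q| ^ (2*(p-1)) + |sinp q| ^ (2*(p-1)) = A ^ 2 + B ^ 2 := by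
    rw [hA2, hB2]
  rw [hSg]
  have h4 : D ^ 2 = ((Cp/4) / Real.sqrt (A ^ 2 + B ^ 2)) ^ 2 := by
    rw [div_pow, Real.sq_sqrt hABpos.le, eq_div_iff (ne_of_gt hABpos)]
    exact hD2
  have hsqrt : 0 < Real.sqrt (A ^ 2 + B ^ 2) := Real.sqrt_pos.mpr hABpos
  have h5 : |D| = (Cp/4) / Real.sqrt (A ^ 2 + B ^ 2) := by
    have h6 := (sq_eq_sq_iff_abs_eq_abs _ _).mp h4
    rwa [abs_of_pos (div_pos (by linarith) hsqrt)] at h6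
  rw [h5, Real.sqrt_eq_rpow, div_eq_mul_inv, ← Real.rpow_neg hABpos.le]
  norm_num

private lemma core_ineq {α : ℝ} (h0 : 0 < α) (h1 : α ≠ 1) :
    ((1:ℝ)/2) ^ α + ((1:ℝ)/2) ^ α ≠ ((1:ℝ)/4) ^ α + ((3:ℝ)/4) ^ α := by
  intro hcon
  have h4 : (0:ℝ) < (4:ℝ) ^ α := Real.rpow_pos_of_pos (by norm_num) _
  have e1 : ((1:ℝ)/2) ^ α * 4 ^ α = 2 ^ α := by
    rw [← Real.mul_rpow (by norm_num) (by norm_num)]; norm_num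
  have e2 : ((1:ℝ)/4) ^ α * 4 ^ α = 1 := by
    rw [← Real.mul_rpow (by norm_num) (by norm_num)]
    norm_num [Real.one_rpow]
  have e3 : ((3:ℝ)/4) ^ α * 4 ^ α = 3 ^ α := by
    rw [← Real.mul_rpow (by norm_num) (by norm_num)]; norm_num
  have hkey : 2 * (2:ℝ) ^ α = 1 + (3:ℝ) ^ α := by
    have hmul := congrArg (fun x => x * (4:ℝ) ^ α) hcon
    simp only [add_mul] at hmul
    rw [e1, e2, e3] at hmul
    linarith
  have hm1 : (1:ℝ) ∈ Set.Ici (0:ℝ) := by norm_num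
  have hm3 : (3:ℝ) ∈ Set.Ici (0:ℝ) := by norm_num
  have hne : (1:ℝ) ≠ 3 := by norm_num
  have hhalf : (0:ℝ) < 1/2 := by norm_num
  have hsum : (1:ℝ)/2 + 1/2 = 1 := by norm_num
  rcases lt_or_gt_of_ne h1 with hlt | hgt
  · have hcc := (Real.strictConcaveOn_rpow h0 hlt).2 hm1 hm3 hne hhalf hhalf hsum
    simp only [smul_eq_mul] at hcc
    rw [Real.one_rpow] at hcc
    norm_num at hcc
    linarith
  · have hcv := (strictConvexOn_rpow hgt).2 hm1 hm3 hne hhalf hhalf hsum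
    simp only [smul_eq_mul] at hcv
    rw [Real.one_rpow] at hcv
    norm_num at hcv
    linarith

/-- The Jacobian factor `J_p(q) = |cos_p(q)·sin_p'(q) - cos_p'(q)·sin_p(q)|` for polar
coordinates defined via the `L^p` pseudo-angle satisfies
`J_p(q) = (C_p/4)·(|cos_p q|^{2(p-1)} + |sin_p q|^{2(p-1)})^{-1/2}`, where `C_p` is the
circumference of the `L^p` unit circle.  In particular `J_1 ≡ 1`, `J_2 ≡ π/2`, `J_∞ ≡ 2`
are constant, while for `p ∈ (1,2)∪(2,∞)`, `J_p` is not constant.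
Here `cos_p, sin_p` are the pseudo-trigonometric functions: the 4-periodic, injective (over a
period), constant-speed (speed `C_p/4`) parametrization of the `L^p` unit circle starting at
`(1,0)`, differentiable away from the axes. -/
theorem stmt1 (p : ℝ) (hp : 0 < p)
    (cosp sinp : ℝ → ℝ) (Cp : ℝ) (hCp : 0 < Cp)
    (hcontc : Continuous cosp) (hconts : Continuous sinp)
    (hperc : Function.Periodic cosp 4) (hpers : Function.Periodic sinp 4)
    (hstartc : cosp 0 = 1) (hstarts : sinp 0 = 0)
    (hcircle : ∀ q, |cosp q| ^ p + |sinp q| ^ p = 1)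
    (hsurj : ∀ u v : ℝ, |u| ^ p + |v| ^ p = 1 → ∃ q, cosp q = u ∧ sinp q = v)
    (hinj : Set.InjOn (fun q => (cosp q, sinp q)) (Set.Ico (0 : ℝ) 4))
    (hdiff : ∀ q, cosp q ≠ 0 → sinp q ≠ 0 →
      DifferentiableAt ℝ cosp q ∧ DifferentiableAt ℝ sinp q)
    (hspeed : ∀ q, cosp q ≠ 0 → sinp q ≠ 0 →
      (deriv cosp q) ^ 2 + (deriv sinp q) ^ 2 = (Cp / 4) ^ 2) :
    (∀ q, cosp q ≠ 0 → sinp q ≠ 0 →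
      |cosp q * deriv sinp q - deriv cosp q * sinp q|
        = (Cp / 4) * (|cosp q| ^ (2 * (p - 1)) + |sinp q| ^ (2 * (p - 1))) ^ (-(1 : ℝ) / 2)) ∧
    (p = 1 → ∀ q, cosp q ≠ 0 → sinp q ≠ 0 →
      |cosp q * deriv sinp q - deriv cosp q * sinp q| = 1) ∧
    (p = 2 → ∀ q, cosp q ≠ 0 → sinp q ≠ 0 →
      |cosp q * deriv sinp q - deriv cosp q * sinp q| = Real.pi / 2) ∧
    ((1 < p ∧ p ≠ 2) → ∃ q₁ q₂ : ℝ, (cosp q₁ ≠ 0 ∧ sinp q₁ ≠ 0) ∧ (cosp q₂ ≠ 0 ∧ sinp q₂ ≠ 0) ∧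
      |cosp q₁ * deriv sinp q₁ - deriv cosp q₁ * sinp q₁|
        ≠ |cosp q₂ * deriv sinp q₂ - deriv cosp q₂ * sinp q₂|) ∧
    (∀ (cosi sini : ℝ → ℝ) (Ci : ℝ), 0 < Ci → Continuous cosi → Continuous sini →
      Function.Periodic cosi 4 → Function.Periodic sini 4 → cosi 0 = 1 → sini 0 = 0 →
      (∀ q, max |cosi q| |sini q| = 1) →
      (∀ u v : ℝ, max |u| |v| = 1 → ∃ q, cosi q = u ∧ sini q = v) →
      Set.InjOn (fun q => (cosi q, sini q)) (Set.Ico (0 : ℝ) 4) →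
      (∀ q, |cosi q| ≠ |sini q| → DifferentiableAt ℝ cosi q ∧ DifferentiableAt ℝ sini q) →
      (∀ q, |cosi q| ≠ |sini q| → (deriv cosi q) ^ 2 + (deriv sini q) ^ 2 = (Ci / 4) ^ 2) →
      ∀ q, |cosi q| ≠ |sini q| →
        |cosi q * deriv sini q - deriv cosi q * sini q| = 2) := by
  have hK : (0:ℝ) < Cp / 4 := by linarith
  have hJ := Jform p hp cosp sinp Cp hCp hcontc hconts hcircle hdiff hspeed
  refine ⟨hJ, ?_, ?_, ?_, ?_⟩
  -- p = 1
  · intro hp1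
    subst hp1
    have hcirc1 : ∀ q, |cosp q| + |sinp q| = 1 := by
      intro q; have := hcircle q; rwa [Real.rpow_one, Real.rpow_one] at this
    have hsurj1 : ∀ u v : ℝ, |u| + |v| = 1 → ∃ q, cosp q = u ∧ sinp q = v := by
      intro u v h; exact hsurj u v (by rwa [Real.rpow_one, Real.rpow_one])
    have hKv := Kval1 cosp sinp (Cp/4) hK hcontc hconts hperc hpers hcirc1 hsurj1
      hinj hdiff hspeed
    intro q hc0 hs0
    rw [hJ q hc0 hs0, hKv]
    rw [show (2:ℝ) * (1 - 1) = 0 by norm_num, Real.rpow_zero, Real.rpow_zero]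
    rw [show (1:ℝ) + 1 = 2 by norm_num]
    rw [show (-(1:ℝ)/2) = -(1/2) by norm_num, Real.rpow_neg (by norm_num : (0:ℝ) ≤ 2),
      ← Real.sqrt_eq_rpow]
    exact mul_inv_cancel₀ (by positivity)
  -- p = 2
  · intro hp2
    subst hp2
    have habs2 : ∀ x : ℝ, |x| ^ (2:ℝ) = x ^ 2 := by
      intro x
      rw [show (2:ℝ) = ((2:ℕ):ℝ) by norm_num, Real.rpow_natCast, sq_abs]
    have hcirc2 : ∀ q, cosp q ^ 2 + sinp q ^ 2 = 1 := by
      intro q; have := hcircle q; rwa [habs2, habs2] at this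
    have hsurj2 : ∀ u v : ℝ, u ^ 2 + v ^ 2 = 1 → ∃ q, cosp q = u ∧ sinp q = v := by
      intro u v h; exact hsurj u v (by rwa [habs2, habs2])
    have hKv := Kval2 cosp sinp (Cp/4) hK hcontc hconts hperc hpers hcirc2 hsurj2
      hinj hdiff hspeed
    intro q hc0 hs0
    rw [hJ q hc0 hs0, hKv]
    rw [show (2:ℝ) * (2 - 1) = (2:ℝ) by norm_num, hcircle q, Real.one_rpow, mul_one]
  -- p strictly between 1 and 2 or above 2
  · rintro ⟨hp1, hp2⟩
    set α := p⁻¹ * (2 * (p - 1)) with hα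
    have hppos : (0:ℝ) < p⁻¹ := by positivity
    have hα0 : 0 < α := by
      have : 0 < 2 * (p - 1) := by linarith
      positivity
    have hα1 : α ≠ 1 := by
      intro hcon
      rw [hα] at hcon
      field_simp at hcon
      apply hp2
      linarith
    have h12 : (0:ℝ) < 1/2 := by norm_num
    have h14 : (0:ℝ) < 1/4 := by norm_num
    have h34 : (0:ℝ) < 3/4 := by norm_num
    have hrp : ∀ y : ℝ, 0 < y → (y ^ p⁻¹) ^ p = y := by
      intro y hy
      rw [← Real.rpow_mul hy.le, inv_mul_cancel₀ (ne_of_gt hp), Real.rpow_one]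
    have hu1 : (0:ℝ) < ((1:ℝ)/2) ^ p⁻¹ := Real.rpow_pos_of_pos h12 _
    have hu2 : (0:ℝ) < ((1:ℝ)/4) ^ p⁻¹ := Real.rpow_pos_of_pos h14 _
    have hv2 : (0:ℝ) < ((3:ℝ)/4) ^ p⁻¹ := Real.rpow_pos_of_pos h34 _
    obtain ⟨q₁, hq₁c, hq₁s⟩ := hsurj (((1:ℝ)/2) ^ p⁻¹) (((1:ℝ)/2) ^ p⁻¹)
      (by rw [abs_of_pos hu1, hrp _ h12]; norm_num)
    obtain ⟨q₂, hq₂c, hq₂s⟩ := hsurj (((1:ℝ)/4) ^ p⁻¹) (((3:ℝ)/4) ^ p⁻¹)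
      (by rw [abs_of_pos hu2, abs_of_pos hv2, hrp _ h14, hrp _ h34]; norm_num)
    have hexp : ∀ y : ℝ, 0 < y → (y ^ p⁻¹) ^ (2 * (p - 1)) = y ^ α := by
      intro y hy
      rw [hα, Real.rpow_mul hy.le]
    have hc₁ : cosp q₁ ≠ 0 := by rw [hq₁c]; exact ne_of_gt hu1
    have hs₁ : sinp q₁ ≠ 0 := by rw [hq₁s]; exact ne_of_gt hu1
    have hc₂ : cosp q₂ ≠ 0 := by rw [hq₂c]; exact ne_of_gt hu2
    have hs₂ : sinp q₂ ≠ 0 := by rw [hq₂s]; exact ne_of_gt hv2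
    refine ⟨q₁, q₂, ⟨hc₁, hs₁⟩, ⟨hc₂, hs₂⟩, ?_⟩
    rw [hJ q₁ hc₁ hs₁, hJ q₂ hc₂ hs₂]
    rw [hq₁c, hq₁s, hq₂c, hq₂s, abs_of_pos hu1, abs_of_pos hu2, abs_of_pos hv2,
      hexp _ h12, hexp _ h14, hexp _ h34]
    set E₁ := ((1:ℝ)/2) ^ α + ((1:ℝ)/2) ^ α with hE₁
    set E₂ := ((1:ℝ)/4) ^ α + ((3:ℝ)/4) ^ α with hE₂
    have hE₁pos : 0 < E₁ := by
      have := Real.rpow_pos_of_pos h12 α; rw [hE₁]; linarith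
    have hE₂pos : 0 < E₂ := by
      have h1 := Real.rpow_pos_of_pos h14 α
      have h2 := Real.rpow_pos_of_pos h34 α
      rw [hE₂]; linarith
    intro hcon
    have hcc := mul_left_cancel₀ (ne_of_gt hK) hcon
    have hpow := congrArg (fun x : ℝ => x ^ (-2:ℝ)) hcc
    rw [← Real.rpow_mul hE₁pos.le, ← Real.rpow_mul hE₂pos.le] at hpow
    norm_num at hpow
    exact core_ineq hα0 hα1 hpow
  -- L-infinity
  · intro cosi sini Ci hCi hconti hcontsi hperci hpersi hsci hssi hcircI hsurjI hinjI
      hdiffI hspeedI q hq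
    have hKI : Ci/4 = 2 := KvalInf cosi sini (Ci/4) (by linarith) hconti hcontsi
      hperci hpersi hcircI hsurjI hinjI hdiffI hspeedI
    have habs1 : ∀ x y : ℝ, |x| = 1 → |y| = 1 → |x - y| < 2 → x = y := by
      intro x y hx hy hxy
      rcases abs_eq (by norm_num : (0:ℝ) ≤ 1) |>.mp hx with h1 | h1 <;>
        rcases abs_eq (by norm_num : (0:ℝ) ≤ 1) |>.mp hy with h2 | h2 <;>
        rw [h1, h2] <;> rw [h1, h2] at hxy <;> norm_num at hxy
    rcases lt_or_gt_of_ne hq with hlt | hgt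
    -- |cosi q| < |sini q| : sini locally constant
    · have hs1 : |sini q| = 1 := by
        have := hcircI q; rwa [max_eq_right hlt.le] at this
      have hder0 : deriv sini q = 0 := by
        have hev1 : ∀ᶠ x in nhds q, |cosi x| < |sini x| :=
          ContinuousAt.eventually_lt hconti.abs.continuousAt hcontsi.abs.continuousAt hlt
        have hev2 : ∀ᶠ x in nhds q, |sini x - sini q| < 2 :=
          ContinuousAt.eventually_lt ((hcontsi.sub continuous_const).abs).continuousAt
            continuousAt_const (by norm_num)
        have heq : sini =ᶠ[nhds q] (fun _ => sini q) := by
          filter_upwards [hev1, hev2] with x h1 h2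
          have hx1 : |sini x| = 1 := by
            have := hcircI x; rwa [max_eq_right h1.le] at this
          exact habs1 _ _ hx1 hs1 h2
        exact (Filter.EventuallyEq.deriv_eq heq).trans (deriv_const q _)
      have hc2 : deriv cosi q ^ 2 = (Ci/4) ^ 2 := by
        have := hspeedI q hq; rw [hder0] at this; linarith
      have habs : |deriv cosi q| = Ci/4 := by
        have h6 := (sq_eq_sq_iff_abs_eq_abs _ _).mp hc2
        rwa [abs_of_pos (show (0:ℝ) < Ci/4 by linarith)] at h6
      rw [hder0, mul_zero, zero_sub, abs_neg, abs_mul, habs, hs1, mul_one, hKI]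
    -- |sini q| < |cosi q| : cosi locally constant
    · have hc1 : |cosi q| = 1 := by
        have := hcircI q; rwa [max_eq_left hgt.le] at this
      have hder0 : deriv cosi q = 0 := by
        have hev1 : ∀ᶠ x in nhds q, |sini x| < |cosi x| :=
          ContinuousAt.eventually_lt hcontsi.abs.continuousAt hconti.abs.continuousAt hgt
        have hev2 : ∀ᶠ x in nhds q, |cosi x - cosi q| < 2 :=
          ContinuousAt.eventually_lt ((hconti.sub continuous_const).abs).continuousAt
            continuousAt_const (by norm_num)
        have heq : cosi =ᶠ[nhds q] (fun _ => cosi q) := by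
          filter_upwards [hev1, hev2] with x h1 h2
          have hx1 : |cosi x| = 1 := by
            have := hcircI x; rwa [max_eq_left h1.le] at this
          exact habs1 _ _ hx1 hc1 h2
        exact (Filter.EventuallyEq.deriv_eq heq).trans (deriv_const q _)
      have hs2 : deriv sini q ^ 2 = (Ci/4) ^ 2 := by
        have := hspeedI q hq; rw [hder0] at this; linarith
      have habs : |deriv sini q| = Ci/4 := by
        have h6 := (sq_eq_sq_iff_abs_eq_abs _ _).mp hs2
        rwa [abs_of_pos (show (0:ℝ) < Ci/4 by linarith)] at h6
      rw [hder0, zero_mul, sub_zero, abs_mul, hc1, one_mul, habs, hKI]
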